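/- arXiv:1112.1730 — 3 statements merged into one kernel-verified Lean document; each statement's English description precedes it below -/
import Mathlib

section
/- A finite satisfaction-form game has a satisfaction equilibrium in mixed strategies if and only if it has a satisfaction equilibrium in pure strategies. In particular, if π* is a mixed SE, then every action profile a in the support of the product measure π*_1 ⊗ ... ⊗ π*_K satisfies a_k ∈ f_k(a_{-k}) for all k, and hence is a pure SE. -/
open scoped Classical

/-- The sub-profile of `a` obtained by dropping player `k`'s coordinate. -/
def coDel {K : Type*} {A : K → Type*} (a : ∀ k, A k) (k : K) :
    ∀ j : {j : K // j ≠ k}, A j.1 := fun j => a j.1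

private lemma key {K : Type*} [Fintype K] [DecidableEq K] (A : K → Type*)
    [∀ k, Fintype (A k)]
    (f : ∀ k : K, (∀ j : {j : K // j ≠ k}, A j.1) → Set (A k))
    (π : ∀ k, A k → ℝ)
    (hpos : ∀ k x, 0 ≤ π k x) (hsum : ∀ k, ∑ x, π k x = 1)
    (hse : ∀ k : K,
        (∑ a : ∀ j, A j,
          (∏ j, π j (a j)) *
            (if a k ∈ f k (coDel a k) then (1 : ℝ) else 0)) = 1)
    (a : ∀ j, A j) (ha : 0 < ∏ j, π j (a j)) (k : K) :
    a k ∈ f k (coDel a k) := by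
  classical
  have hT : (∑ b : ∀ j, A j, ∏ j, π j (b j)) = 1 := by
    rw [← Fintype.piFinset_univ, ← Finset.prod_univ_sum]
    simp [hsum]
  have hzero : (∑ b : ∀ j, A j,
      (∏ j, π j (b j)) * (1 - (if b k ∈ f k (coDel b k) then (1 : ℝ) else 0))) = 0 := by
    have := hse k
    simp only [mul_sub, mul_one, Finset.sum_sub_distrib, hT, this]
    ring
  have hterm : ∀ b : ∀ j, A j,
      0 ≤ (∏ j, π j (b j)) * (1 - (if b k ∈ f k (coDel b k) then (1 : ℝ) else 0)) := by
    intro b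
    apply mul_nonneg
    · exact Finset.prod_nonneg fun j _ => hpos j (b j)
    · split <;> norm_num
  have h0 := (Finset.sum_eq_zero_iff_of_nonneg (fun b _ => hterm b)).mp hzero a
    (Finset.mem_univ a)
  by_contra hc
  rw [if_neg hc] at h0
  simp at h0
  exact absurd h0 (by positivity)

/-- A finite satisfaction-form game has a mixed SE iff it has a pure SE; moreover, every
profile in the support of the product measure of a mixed SE is a pure SE. -/
theorem stmt_4 {K : Type*} [Fintype K] [DecidableEq K] [Nonempty K] (A : K → Type*)
    [∀ k, Fintype (A k)] [∀ k, Nonempty (A k)]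
    (f : ∀ k : K, (∀ j : {j : K // j ≠ k}, A j.1) → Set (A k)) :
    ((∃ π : ∀ k, A k → ℝ,
        (∀ k x, 0 ≤ π k x) ∧ (∀ k, ∑ x, π k x = 1) ∧
        (∀ k : K,
          (∑ a : ∀ j, A j,
            (∏ j, π j (a j)) *
              (if a k ∈ f k (coDel a k) then (1 : ℝ) else 0)) = 1)) ↔
      (∃ a : ∀ k, A k, ∀ k, a k ∈ f k (coDel a k))) ∧
    (∀ π : ∀ k, A k → ℝ,
      (∀ k x, 0 ≤ π k x) → (∀ k, ∑ x, π k x = 1) →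
      (∀ k : K,
        (∑ a : ∀ j, A j,
          (∏ j, π j (a j)) *
            (if a k ∈ f k (coDel a k) then (1 : ℝ) else 0)) = 1) →
      ∀ a : ∀ j, A j, 0 < ∏ j, π j (a j) → ∀ k, a k ∈ f k (coDel a k)) := by
  classical
  constructor
  · constructor
    · rintro ⟨π, hpos, hsum, hse⟩
      -- pick for each k some x with π k x > 0
      have hex : ∀ k : K, ∃ x : A k, 0 < π k x := by
        intro k
        by_contra h
        push_neg at h
        have hz : ∀ x : A k, π k x = 0 := fun x => le_antisymm (h x) (hpos k x)
        have h1 := hsum k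
        rw [Finset.sum_congr rfl (fun x _ => hz x)] at h1
        simp at h1
      choose a ha using hex
      refine ⟨a, fun k => key A f π hpos hsum hse a ?_ k⟩
      exact Finset.prod_pos fun j _ => ha j
    · rintro ⟨a, ha⟩
      refine ⟨fun k x => if x = a k then 1 else 0, ?_, ?_, ?_⟩
      · intro k x; dsimp only; split <;> norm_num
      · intro k; simp
      · intro k
        have hprod : ∀ b : ∀ j, A j,
            (∏ j, (if b j = a j then (1 : ℝ) else 0)) = if b = a then 1 else 0 := by
          intro b
          by_cases hb : b = a
          · subst hb; simp
          · rw [if_neg hb]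
            obtain ⟨j, hj⟩ : ∃ j, b j ≠ a j := by
              by_contra h; push_neg at h; exact hb (funext h)
            exact Finset.prod_eq_zero (Finset.mem_univ j) (if_neg hj)
        calc (∑ b : ∀ j, A j,
              (∏ j, (if b j = a j then (1:ℝ) else 0)) *
                (if b k ∈ f k (coDel b k) then (1 : ℝ) else 0))
            = ∑ b : ∀ j, A j, (if b = a then (1:ℝ) else 0) *
                (if b k ∈ f k (coDel b k) then (1 : ℝ) else 0) := by
              exact Finset.sum_congr rfl fun b _ => by rw [hprod b]
          _ = 1 := by
              rw [Finset.sum_eq_single a (fun b _ hb => by rw [if_neg hb, zero_mul])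
                (fun h => absurd (Finset.mem_univ a) h)]
              simp [ha k]
  · exact fun π hpos hsum hse a ha k => key A f π hpos hsum hse a ha k
end

section
/- Let G = (K, {A_k}, {u_k}, {g_k}) be a finite exact constrained potential game with potential φ. If the graphs F_k = {(a_k, a_{-k}) ∈ A : a_k ∈ g_k(a_{-k})} of the constraint correspondences are nonempty and all equal (F_1 = ... = F_K = F), then G has at least one generalized Nash equilibrium in pure strategies; in particular, any maximizer of φ over F is a GNE. -/
lemma coDel_update {K : Type*} [DecidableEq K] {A : K → Type*} (a : ∀ k, A k) (k : K)
    (b : A k) : coDel (Function.update a k b) k = coDel a k := by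
  funext j
  simp [coDel, Function.update, j.2]

/-- A finite exact constrained potential game whose constraint graphs are nonempty and
all identical has a generalized Nash equilibrium; in particular any maximizer of the
potential over the common feasible set is a GNE. -/
theorem stmt_13 {K : Type*} [Fintype K] [DecidableEq K] [Nonempty K] (A : K → Type*)
    [∀ k, Fintype (A k)] [∀ k, Nonempty (A k)]
    (u : ∀ _ : K, (∀ j, A j) → ℝ)
    (g : ∀ k : K, (∀ j : {j : K // j ≠ k}, A j.1) → Set (A k))
    (φ : (∀ k, A k) → ℝ)
    (hpot : ∀ a : ∀ k, A k, (∃ i : K, a i ∈ g i (coDel a i)) →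
      ∀ (k : K), ∀ b ∈ g k (coDel a k),
        u k a - u k (Function.update a k b) = φ a - φ (Function.update a k b))
    (hgraphs_eq : ∀ (k j : K) (a : ∀ i, A i),
      a k ∈ g k (coDel a k) ↔ a j ∈ g j (coDel a j))
    (hgraphs_ne : ∃ a : ∀ i, A i, ∀ k : K, a k ∈ g k (coDel a k)) :
    (∃ a : ∀ k, A k, ∀ k : K, a k ∈ g k (coDel a k) ∧
        ∀ b ∈ g k (coDel a k), u k a ≥ u k (Function.update a k b)) ∧
    (∀ a : ∀ k, A k, (∀ k : K, a k ∈ g k (coDel a k)) →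
      (∀ b : ∀ k, A k, (∀ k : K, b k ∈ g k (coDel b k)) → φ b ≤ φ a) →
      ∀ k : K, a k ∈ g k (coDel a k) ∧
        ∀ b ∈ g k (coDel a k), u k a ≥ u k (Function.update a k b)) := by
  -- main part: any maximizer is a GNE
  have main : ∀ a : ∀ k, A k, (∀ k : K, a k ∈ g k (coDel a k)) →
      (∀ b : ∀ k, A k, (∀ k : K, b k ∈ g k (coDel b k)) → φ b ≤ φ a) →
      ∀ k : K, a k ∈ g k (coDel a k) ∧
        ∀ b ∈ g k (coDel a k), u k a ≥ u k (Function.update a k b) := by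
    intro a ha hmax k
    refine ⟨ha k, fun b hb => ?_⟩
    set a' := Function.update a k b with ha'
    have hfa' : ∀ j, a' j ∈ g j (coDel a' j) := by
      have hk : a' k ∈ g k (coDel a' k) := by
        rw [ha', coDel_update]
        simpa using hb
      intro j
      exact (hgraphs_eq k j a').mp hk
    have hle : φ a' ≤ φ a := hmax a' hfa'
    have := hpot a ⟨k, ha k⟩ k b hb
    linarith
  refine ⟨?_, main⟩
  -- existence of a maximizer
  classical
  obtain ⟨a0, ha0⟩ := hgraphs_ne
  have : ∃ a ∈ Finset.univ.filter (fun a : ∀ k, A k => ∀ k, a k ∈ g k (coDel a k)),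
      ∀ b ∈ Finset.univ.filter (fun a : ∀ k, A k => ∀ k, a k ∈ g k (coDel a k)), φ b ≤ φ a := by
    apply Finset.exists_max_image
    exact ⟨a0, by simpa using ha0⟩
  obtain ⟨a, ha, hmax⟩ := this
  simp only [Finset.mem_filter, Finset.mem_univ, true_and] at ha hmax
  exact ⟨a, main a ha fun b hb => hmax b hb⟩
end

section
/- Let (K, {A_k}, {f_k}) be a finite satisfaction-form game. Suppose player k has a clipping action a*_k (i.e., a*_k ∈ f_k(a_{-k}) for all a_{-k}) and there is a player j ≠ k such that f_j(a_k = a*_k, a_{-{j,k}}) = ∅ for every a_{-{j,k}}. Then under the satisfaction-driven dynamics with full-support exploration, once player k plays a*_k at any time before the process has reached an SE, the process never reaches a satisfaction equilibrium; moreover this event has strictly positive probability, so the dynamics fails to converge to an SE with strictly positive probability. -/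
open scoped Classical

/-- `n`-step transition probabilities of the Markov chain with kernel `P`. -/
noncomputable def nstep {S : Type*} [Fintype S] (P : S → S → ℝ) : ℕ → S → S → ℝ
  | 0, a, b => if b = a then 1 else 0
  | n + 1, a, b => ∑ c, nstep P n a c * P c b

/-- If player `k` has a clipping action `a*_k` whose use makes some other player `j`'s
constraint set empty, then under the satisfaction-driven dynamics with exploration
probabilities bounded below by `δ`: once `k` plays `a*_k` the process never reaches an SE,
and from any state where `k` is unsatisfied the probability of ever converging to an SE is
at most `1 - δ`; so convergence fails with strictly positive probability. -/
theorem stmt_16 {K : Type*} [Fintype K] [DecidableEq K] [Nonempty K] (A : K → Type*)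
    [∀ k, Fintype (A k)] [∀ k, DecidableEq (A k)] [∀ k, Nonempty (A k)]
    (f : ∀ k : K, (∀ j : {j : K // j ≠ k}, A j.1) → Set (A k))
    (k : K) (astark : A k)
    (hclip : ∀ s : ∀ j : {j : K // j ≠ k}, A j.1, astark ∈ f k s)
    (j : K) (hjk : j ≠ k)
    (hempty : ∀ a : ∀ i, A i, a k = astark → f j (coDel a j) = ∅)
    (δ : ℝ) (hδ : 0 < δ)
    (π : ∀ i : K, A i → ℝ)
    (hπδ : ∀ i x, δ ≤ π i x) (hπsum : ∀ i, ∑ x, π i x = 1)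
    (P : (∀ i, A i) → (∀ i, A i) → ℝ)
    (hP : ∀ a b : ∀ i, A i,
      P a b = ∏ i, (if a i ∈ f i (coDel a i)
                      then (if b i = a i then (1 : ℝ) else 0)
                      else π i (b i))) :
    (∀ b : ∀ i, A i, b k = astark → ¬(∀ i, b i ∈ f i (coDel b i))) ∧
    (∀ a : ∀ i, A i, a k = astark →
      ∀ n : ℕ, (∑ b : ∀ i, A i,
        (if (∀ i, b i ∈ f i (coDel b i)) then nstep P n a b else 0)) = 0) ∧
    (∀ a0 : ∀ i, A i, a0 k ∉ f k (coDel a0 k) →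
      ∀ n : ℕ, 1 ≤ n →
        (∑ b : ∀ i, A i,
          (if (∀ i, b i ∈ f i (coDel b i)) then nstep P n a0 b else 0)) ≤ 1 - δ) := by
  -- Part 1: no SE has `b k = astark`.
  have hSEnot : ∀ b : ∀ i, A i, b k = astark → ¬(∀ i, b i ∈ f i (coDel b i)) := by
    intro b hb hall
    have h1 := hall j
    rw [hempty b hb] at h1
    exact h1
  -- nonnegativity of P
  have hPnn : ∀ a b, 0 ≤ P a b := by
    intro a b
    rw [hP a b]
    apply Finset.prod_nonneg
    intro i _
    split_ifs with h1 h2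
    · norm_num
    · norm_num
    · exact le_trans hδ.le (hπδ i (b i))
  -- each row factor sums to 1
  have hrowfac : ∀ a : ∀ i, A i, ∀ i : K,
      (∑ x : A i, (if a i ∈ f i (coDel a i) then (if x = a i then (1:ℝ) else 0) else π i x)) = 1 := by
    intro a i
    split_ifs with h
    · simp
    · exact hπsum i
  -- rows of P sum to 1
  have hProw : ∀ a, (∑ b, P a b) = 1 := by
    intro a
    have h1 : (∑ b, P a b)
        = ∑ b : ∀ i, A i, ∏ i, (if a i ∈ f i (coDel a i)
            then (if b i = a i then (1:ℝ) else 0) else π i (b i)) := by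
      exact Finset.sum_congr rfl fun b _ => hP a b
    rw [h1, ← Fintype.prod_sum
      (fun i x => if a i ∈ f i (coDel a i) then (if x = a i then (1:ℝ) else 0) else π i x)]
    rw [Finset.prod_congr rfl fun i _ => hrowfac a i]
    simp
  -- absorbing: from a state with `a k = astark`, only states with `b k = astark` are reachable
  have hPzero : ∀ a b : ∀ i, A i, a k = astark → b k ≠ astark → P a b = 0 := by
    intro a b ha hb
    rw [hP a b]
    apply Finset.prod_eq_zero (Finset.mem_univ k)
    rw [if_pos (by rw [ha]; exact hclip _), if_neg (by rw [ha]; exact hb)]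
  have hNzero : ∀ n : ℕ, ∀ a b : ∀ i, A i, a k = astark → b k ≠ astark →
      nstep P n a b = 0 := by
    intro n
    induction n with
    | zero =>
      intro a b ha hb
      simp only [nstep]
      rw [if_neg]
      intro hba
      exact hb (hba ▸ ha)
    | succ n ih =>
      intro a b ha hb
      simp only [nstep]
      apply Finset.sum_eq_zero
      intro c _
      by_cases hc : c k = astark
      · rw [hPzero c b hc hb, mul_zero]
      · rw [ih a c ha hc, zero_mul]
  -- nonnegativity of nstep
  have hNnn : ∀ n : ℕ, ∀ a b : ∀ i, A i, 0 ≤ nstep P n a b := by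
    intro n
    induction n with
    | zero =>
      intro a b
      simp only [nstep]
      split_ifs <;> norm_num
    | succ n ih =>
      intro a b
      simp only [nstep]
      exact Finset.sum_nonneg fun c _ => mul_nonneg (ih a c) (hPnn c b)
  -- rows of nstep sum to 1
  have hNrow : ∀ n : ℕ, ∀ a : ∀ i, A i, (∑ b, nstep P n a b) = 1 := by
    intro n
    induction n with
    | zero =>
      intro a
      simp only [nstep]
      exact Eq.trans (Finset.sum_eq_single a (fun b _ hb => if_neg hb)
        (fun h => absurd (Finset.mem_univ a) h)) (if_pos rfl)
    | succ n ih =>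
      intro a
      simp only [nstep]
      rw [Finset.sum_comm]
      have h1 : ∀ c : ∀ i, A i, (∑ b, nstep P n a c * P c b) = nstep P n a c := by
        intro c
        rw [← Finset.mul_sum, hProw c, mul_one]
      rw [Finset.sum_congr rfl fun c _ => h1 c]
      exact ih a
  -- Part 2
  have hpart2 : ∀ a : ∀ i, A i, a k = astark →
      ∀ n : ℕ, (∑ b : ∀ i, A i,
        (if (∀ i, b i ∈ f i (coDel b i)) then nstep P n a b else 0)) = 0 := by
    intro a ha n
    apply Finset.sum_eq_zero
    intro b _
    by_cases hb : ∀ i, b i ∈ f i (coDel b i)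
    · rw [if_pos hb]
      apply hNzero n a b ha
      intro hbk
      exact hSEnot b hbk hb
    · rw [if_neg hb]
  -- Chapman-Kolmogorov: decompose the first step
  have hCK : ∀ m : ℕ, ∀ a b : ∀ i, A i,
      nstep P (m + 1) a b = ∑ c, P a c * nstep P m c b := by
    intro m
    induction m with
    | zero =>
      intro a b
      show (∑ c, nstep P 0 a c * P c b) = ∑ c, P a c * nstep P 0 c b
      simp [nstep]
    | succ m ih =>
      intro a b
      show (∑ c, nstep P (m + 1) a c * P c b) = ∑ d, P a d * nstep P (m + 1) d b
      calc (∑ c, nstep P (m + 1) a c * P c b)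
          = ∑ c, (∑ d, P a d * nstep P m d c) * P c b := by
            exact Finset.sum_congr rfl fun c _ => by rw [ih a c]
        _ = ∑ c, ∑ d, P a d * nstep P m d c * P c b := by
            exact Finset.sum_congr rfl fun c _ => by rw [Finset.sum_mul]
        _ = ∑ d, ∑ c, P a d * nstep P m d c * P c b := Finset.sum_comm
        _ = ∑ d, P a d * ∑ c, nstep P m d c * P c b := by
            refine Finset.sum_congr rfl fun d _ => ?_
            rw [Finset.mul_sum]
            exact Finset.sum_congr rfl fun c _ => by ring
        _ = ∑ d, P a d * nstep P (m + 1) d b := rfl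
  refine ⟨hSEnot, hpart2, ?_⟩
  -- Part 3
  intro a0 hk0 n hn
  -- the mass going to `c k = astark` in one step is at least δ
  have hmass : δ ≤ ∑ c : ∀ i, A i, (if c k = astark then P a0 c else 0) := by
    set g : ∀ i : K, A i → ℝ := fun i x =>
      if a0 i ∈ f i (coDel a0 i) then (if x = a0 i then (1:ℝ) else 0) else π i x with hgdef
    set g' : ∀ i : K, A i → ℝ := fun i x =>
      if h : i = k then (if x = h.symm ▸ astark then g i x else 0) else g i x with hg'def
    have hgk : ∀ x : A k, g' k x = if x = astark then g k x else 0 := by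
      intro x
      rw [hg'def]
      simp
    have h1 : ∀ c : ∀ i, A i,
        (if c k = astark then P a0 c else 0) = ∏ i, g' i (c i) := by
      intro c
      rw [← Finset.mul_prod_erase Finset.univ (fun i => g' i (c i)) (Finset.mem_univ k)]
      rw [hgk (c k)]
      have herase : ∀ i ∈ Finset.univ.erase k, g' i (c i) = g i (c i) := by
        intro i hi
        rw [hg'def]
        simp only [dif_neg (Finset.mem_erase.mp hi).1]
      rw [Finset.prod_congr rfl herase]
      by_cases hc : c k = astark
      · rw [if_pos hc, if_pos hc, hP a0 c]
        rw [← Finset.mul_prod_erase Finset.univ _ (Finset.mem_univ k)]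
      · rw [if_neg hc, if_neg hc, zero_mul]
    rw [Finset.sum_congr rfl fun c _ => h1 c, ← Fintype.prod_sum g']
    rw [← Finset.mul_prod_erase Finset.univ (fun i => ∑ x, g' i x) (Finset.mem_univ k)]
    have h3 : (∑ x : A k, g' k x) = g k astark := by
      rw [Finset.sum_congr rfl fun x _ => hgk x]
      simp
    have h4 : ∀ i ∈ Finset.univ.erase k, (∑ x : A i, g' i x) = 1 := by
      intro i hi
      have herase : ∀ x : A i, g' i x = g i x := by
        intro x
        rw [hg'def]
        simp only [dif_neg (Finset.mem_erase.mp hi).1]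
      rw [Finset.sum_congr rfl fun x _ => herase x, hgdef]
      exact hrowfac a0 i
    rw [h3, Finset.prod_congr rfl h4, Finset.prod_const_one, mul_one, hgdef]
    simp only [if_neg hk0]
    exact hπδ k astark
  -- main estimate
  obtain ⟨m, rfl⟩ : ∃ m, n = m + 1 := ⟨n - 1, (Nat.succ_pred_eq_of_pos hn).symm⟩
  calc (∑ b : ∀ i, A i,
        (if (∀ i, b i ∈ f i (coDel b i)) then nstep P (m + 1) a0 b else 0))
      = ∑ b : ∀ i, A i, ∑ c : ∀ i, A i,
          (if (∀ i, b i ∈ f i (coDel b i)) then P a0 c * nstep P m c b else 0) := by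
        refine Finset.sum_congr rfl fun b _ => ?_
        split_ifs with hb
        · rw [hCK m a0 b]
        · simp
    _ = ∑ c : ∀ i, A i, P a0 c * ∑ b : ∀ i, A i,
          (if (∀ i, b i ∈ f i (coDel b i)) then nstep P m c b else 0) := by
        rw [Finset.sum_comm]
        refine Finset.sum_congr rfl fun c _ => ?_
        rw [Finset.mul_sum]
        refine Finset.sum_congr rfl fun b _ => ?_
        split_ifs with hb
        · rfl
        · rw [mul_zero]
    _ ≤ ∑ c : ∀ i, A i, P a0 c * (if c k = astark then 0 else 1) := by
        refine Finset.sum_le_sum fun c _ => ?_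
        refine mul_le_mul_of_nonneg_left ?_ (hPnn a0 c)
        by_cases hc : c k = astark
        · rw [if_pos hc]
          exact le_of_eq (hpart2 c hc m)
        · rw [if_neg hc]
          calc (∑ b : ∀ i, A i,
                (if (∀ i, b i ∈ f i (coDel b i)) then nstep P m c b else 0))
              ≤ ∑ b, nstep P m c b := by
                refine Finset.sum_le_sum fun b _ => ?_
                split_ifs with hb
                · exact le_rfl
                · exact hNnn m c b
            _ = 1 := hNrow m c
    _ = 1 - ∑ c : ∀ i, A i, (if c k = astark then P a0 c else 0) := by
        have h5 : ∀ c : ∀ i, A i, P a0 c * (if c k = astark then (0:ℝ) else 1)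
            = P a0 c - (if c k = astark then P a0 c else 0) := by
          intro c
          split_ifs <;> ring
        rw [Finset.sum_congr rfl fun c _ => h5 c, Finset.sum_sub_distrib, hProw a0]
    _ ≤ 1 - δ := by linarith [hmass]
end
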